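/- (Local unitary invariance of the entanglement measure on pure states.) Let n > 2 and m > 2, let P₀, Q₀ be fixed rank-one orthogonal projections on ℂⁿ, ℂᵐ, and let μₙ, μₘ be the normalized Haar probability measures on U(n), U(m). For every density matrix σ indexed by (Fin n × Fin m) × (Fin n × Fin m) and all unitaries U ∈ U(n), V ∈ U(m), setting σ' := (U ⊗ₖ V)·σ·(U ⊗ₖ V)ᴴ and F_M(p,q) := tr(M·(p ⊗ₖ q)) − tr((tr₂M)·p)·tr((tr₁M)·q), one has ∫_{U(n)}∫_{U(m)} |F_{σ'}(W P₀ Wᴴ, X Q₀ Xᴴ)|² dμₘ(X) dμₙ(W) = ∫_{U(n)}∫_{U(m)} |F_{σ}(W P₀ Wᴴ, X Q₀ Xᴴ)|² dμₘ(X) dμₙ(W). In particular E(U⊗V σ (U⊗V)ᴴ) = E(σ) for pure states σ. -/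

import Mathlib

open MeasureTheory Matrix Kronecker
open scoped ComplexOrder

noncomputable instance (k : Type*) [Fintype k] [DecidableEq k] :
    MeasurableSpace (Matrix.unitaryGroup k ℂ) := borel _

/-- `p` is a rank-one orthogonal projection. -/
def IsRankOneProj {k : Type*} [Fintype k] [DecidableEq k] (p : Matrix k k ℂ) : Prop :=
  p.IsHermitian ∧ p * p = p ∧ p.rank = 1

/-- Partial trace over the second factor. -/
noncomputable def ptrace2 {n m : ℕ} (M : Matrix (Fin n × Fin m) (Fin n × Fin m) ℂ) :
    Matrix (Fin n) (Fin n) ℂ :=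
  Matrix.of fun i j => ∑ k : Fin m, M (i, k) (j, k)

/-- Partial trace over the first factor. -/
noncomputable def ptrace1 {n m : ℕ} (M : Matrix (Fin n × Fin m) (Fin n × Fin m) ℂ) :
    Matrix (Fin m) (Fin m) ℂ :=
  Matrix.of fun k l => ∑ i : Fin n, M (i, k) (i, l)

/-- The entanglement defect of `M` at the pair of projections `(p,q)`. -/
noncomputable def entDefect {n m : ℕ} (M : Matrix (Fin n × Fin m) (Fin n × Fin m) ℂ)
    (p : Matrix (Fin n) (Fin n) ℂ) (q : Matrix (Fin m) (Fin m) ℂ) : ℂ :=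
  (M * (p ⊗ₖ q)).trace - (ptrace2 M * p).trace * (ptrace1 M * q).trace

/- ### Auxiliary instances and lemmas -/

instance (k : Type*) [Fintype k] [DecidableEq k] :
    BorelSpace (Matrix.unitaryGroup k ℂ) := ⟨rfl⟩

instance (k : Type*) [Fintype k] [DecidableEq k] :
    IsTopologicalGroup (Matrix.unitaryGroup k ℂ) where
  continuous_mul := by
    apply Continuous.subtype_mk
    exact ((continuous_subtype_val.comp continuous_fst).mul
      (continuous_subtype_val.comp continuous_snd))
  continuous_inv := by
    apply Continuous.subtype_mk
    exact continuous_star.comp continuous_subtype_val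

lemma kron_conjTranspose {n m : ℕ} (p : Matrix (Fin n) (Fin n) ℂ)
    (q : Matrix (Fin m) (Fin m) ℂ) : (p ⊗ₖ q)ᴴ = pᴴ ⊗ₖ qᴴ := by
  ext ⟨i, k⟩ ⟨j, l⟩
  simp [Matrix.conjTranspose_apply, Matrix.kroneckerMap_apply, star_mul']

lemma trace_ptrace2_mul {n m : ℕ} (M : Matrix (Fin n × Fin m) (Fin n × Fin m) ℂ)
    (p : Matrix (Fin n) (Fin n) ℂ) :
    (ptrace2 M * p).trace = (M * (p ⊗ₖ (1 : Matrix (Fin m) (Fin m) ℂ))).trace := by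
  simp only [ptrace2, Matrix.trace, Matrix.diag, Matrix.mul_apply, Matrix.of_apply,
    Matrix.kroneckerMap_apply, Matrix.one_apply, Fintype.sum_prod_type, mul_ite, mul_one, mul_zero,
    Finset.sum_ite_eq', Finset.mem_univ, if_true, Finset.sum_mul]
  refine Finset.sum_congr rfl fun x _ => ?_
  exact Finset.sum_comm

lemma trace_ptrace1_mul {n m : ℕ} (M : Matrix (Fin n × Fin m) (Fin n × Fin m) ℂ)
    (q : Matrix (Fin m) (Fin m) ℂ) :
    (ptrace1 M * q).trace = (M * ((1 : Matrix (Fin n) (Fin n) ℂ) ⊗ₖ q)).trace := by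
  simp only [ptrace1, Matrix.trace, Matrix.diag, Matrix.mul_apply, Matrix.of_apply,
    Matrix.kroneckerMap_apply, Matrix.one_apply, Fintype.sum_prod_type, ite_mul, one_mul,
    zero_mul, mul_ite, mul_one, mul_zero, Finset.sum_ite_eq', Finset.mem_univ, if_true,
    Finset.sum_mul]
  have h : ∀ (x : Fin n) (x1 : Fin m),
      (∑ x2 : Fin n, ∑ x3 : Fin m, if x2 = x then M (x, x1) (x2, x3) * q x3 x1 else 0)
        = ∑ x3 : Fin m, M (x, x1) (x, x3) * q x3 x1 := by
    intro x x1
    rw [Finset.sum_comm]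
    simp
  simp only [h]
  exact (Finset.sum_congr rfl fun k _ => Finset.sum_comm).trans Finset.sum_comm

lemma trace_conj {n m : ℕ} (σ : Matrix (Fin n × Fin m) (Fin n × Fin m) ℂ)
    (A : Matrix (Fin n) (Fin n) ℂ) (B : Matrix (Fin m) (Fin m) ℂ)
    (p : Matrix (Fin n) (Fin n) ℂ) (q : Matrix (Fin m) (Fin m) ℂ) :
    ((A ⊗ₖ B) * σ * (A ⊗ₖ B)ᴴ * (p ⊗ₖ q)).trace
      = (σ * ((Aᴴ * p * A) ⊗ₖ (Bᴴ * q * B))).trace := by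
  rw [show (A ⊗ₖ B) * σ * (A ⊗ₖ B)ᴴ * (p ⊗ₖ q)
      = (A ⊗ₖ B) * (σ * ((A ⊗ₖ B)ᴴ * (p ⊗ₖ q))) by rw [mul_assoc, mul_assoc],
    Matrix.trace_mul_comm, kron_conjTranspose]
  congr 1
  rw [mul_assoc]
  congr 1
  rw [← Matrix.mul_kronecker_mul, ← Matrix.mul_kronecker_mul]

lemma entDefect_conj {n m : ℕ} (σ : Matrix (Fin n × Fin m) (Fin n × Fin m) ℂ)
    (A : Matrix (Fin n) (Fin n) ℂ) (B : Matrix (Fin m) (Fin m) ℂ)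
    (hA : Aᴴ * A = 1) (hB : Bᴴ * B = 1)
    (p : Matrix (Fin n) (Fin n) ℂ) (q : Matrix (Fin m) (Fin m) ℂ) :
    entDefect ((A ⊗ₖ B) * σ * (A ⊗ₖ B)ᴴ) p q
      = entDefect σ (Aᴴ * p * A) (Bᴴ * q * B) := by
  unfold entDefect
  rw [trace_conj, trace_ptrace2_mul, trace_ptrace1_mul, trace_conj, trace_conj]
  rw [show Bᴴ * (1 : Matrix (Fin m) (Fin m) ℂ) * B = 1 by rw [mul_one, hB],
    show Aᴴ * (1 : Matrix (Fin n) (Fin n) ℂ) * A = 1 by rw [mul_one, hA],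
    ← trace_ptrace2_mul, ← trace_ptrace1_mul]

/-- Local unitary invariance of the entanglement measure on pure states:
`∫∫ |F_{(U⊗V)σ(U⊗V)ᴴ}|² dμₘ dμₙ = ∫∫ |F_σ|² dμₘ dμₙ`. -/
theorem local_unitary_invariance (n m : ℕ) (hn : 2 < n) (hm : 2 < m)
    (P₀ : Matrix (Fin n) (Fin n) ℂ) (hP₀ : IsRankOneProj P₀)
    (Q₀ : Matrix (Fin m) (Fin m) ℂ) (hQ₀ : IsRankOneProj Q₀)
    (μn : Measure (Matrix.unitaryGroup (Fin n) ℂ))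
    [IsProbabilityMeasure μn] [μn.IsMulLeftInvariant]
    (μm : Measure (Matrix.unitaryGroup (Fin m) ℂ))
    [IsProbabilityMeasure μm] [μm.IsMulLeftInvariant]
    (σ : Matrix (Fin n × Fin m) (Fin n × Fin m) ℂ)
    (hσ : σ.PosSemidef) (hσtr : σ.trace = 1)
    (U : Matrix.unitaryGroup (Fin n) ℂ) (V : Matrix.unitaryGroup (Fin m) ℂ) :
    (∫ W : Matrix.unitaryGroup (Fin n) ℂ,
      ∫ X : Matrix.unitaryGroup (Fin m) ℂ,
        ‖entDefect ((U.1 ⊗ₖ V.1) * σ * (U.1 ⊗ₖ V.1)ᴴ)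
            (W.1 * P₀ * (W.1)ᴴ) (X.1 * Q₀ * (X.1)ᴴ)‖ ^ 2 ∂μm ∂μn)
      = ∫ W : Matrix.unitaryGroup (Fin n) ℂ,
          ∫ X : Matrix.unitaryGroup (Fin m) ℂ,
            ‖entDefect σ (W.1 * P₀ * (W.1)ᴴ) (X.1 * Q₀ * (X.1)ᴴ)‖ ^ 2 ∂μm ∂μn := by
  have hA : (U.1)ᴴ * U.1 = 1 := by
    rw [← Matrix.star_eq_conjTranspose]; exact U.2.1
  have hB : (V.1)ᴴ * V.1 = 1 := by
    rw [← Matrix.star_eq_conjTranspose]; exact V.2.1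
  set g : Matrix.unitaryGroup (Fin n) ℂ → Matrix.unitaryGroup (Fin m) ℂ → ℝ :=
    fun W X => ‖entDefect σ (W.1 * P₀ * (W.1)ᴴ) (X.1 * Q₀ * (X.1)ᴴ)‖ ^ 2 with hg
  have key : ∀ (W : Matrix.unitaryGroup (Fin n) ℂ) (X : Matrix.unitaryGroup (Fin m) ℂ),
      ‖entDefect ((U.1 ⊗ₖ V.1) * σ * (U.1 ⊗ₖ V.1)ᴴ)
          (W.1 * P₀ * (W.1)ᴴ) (X.1 * Q₀ * (X.1)ᴴ)‖ ^ 2 = g (U⁻¹ * W) (V⁻¹ * X) := by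
    intro W X
    rw [hg]
    simp only
    rw [entDefect_conj σ U.1 V.1 hA hB]
    have e1 : (U.1)ᴴ * (W.1 * P₀ * (W.1)ᴴ) * U.1
        = ((U⁻¹ * W).1) * P₀ * (((U⁻¹ * W).1))ᴴ := by
      rw [show ((U⁻¹ * W).1) = (U.1)ᴴ * W.1 from rfl]
      simp only [Matrix.conjTranspose_mul, Matrix.conjTranspose_conjTranspose, mul_assoc]
    have e2 : (V.1)ᴴ * (X.1 * Q₀ * (X.1)ᴴ) * V.1
        = ((V⁻¹ * X).1) * Q₀ * (((V⁻¹ * X).1))ᴴ := by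
      rw [show ((V⁻¹ * X).1) = (V.1)ᴴ * X.1 from rfl]
      simp only [Matrix.conjTranspose_mul, Matrix.conjTranspose_conjTranspose, mul_assoc]
    rw [e1, e2]
  simp only [key]
  have h1 : ∀ W' : Matrix.unitaryGroup (Fin n) ℂ,
      (∫ X, g W' (V⁻¹ * X) ∂μm) = ∫ X, g W' X ∂μm :=
    fun W' => integral_mul_left_eq_self (g W') V⁻¹
  simp only [h1]
  exact integral_mul_left_eq_self (fun W => ∫ X, g W X ∂μm) U⁻¹
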